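/- Let Q ∈ ℍ^p, U ∈ ℂ^{m×p}, V ∈ ℂ^{n×p} with im Uᴴ ∩ im Vᴴ = {0}, and suppose Uₚᴴ Q Uₚ ⪰ 0 and Vₚᴴ Q Vₚ ⪰ 0 where Uₚ, Vₚ span ker U and ker V. Then every x ∈ ker U ∩ ker V with xᴴ Q x = 0 satisfies Q x = 0. -/

import Mathlib

open Matrix
open scoped ComplexOrder

private lemma mem_range_conjTranspose_of_perp_ker {m p : ℕ}
    (A : Matrix (Fin m) (Fin p) ℂ) (w : Fin p → ℂ)
    (h : ∀ v : Fin p → ℂ, A *ᵥ v = 0 → star v ⬝ᵥ w = 0) : ∃ y, Aᴴ *ᵥ y = w := by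
  let g : EuclideanSpace ℂ (Fin m) →ₗ[ℂ] EuclideanSpace ℂ (Fin p) :=
    (WithLp.linearEquiv 2 ℂ (Fin p → ℂ)).symm.toLinearMap ∘ₗ Aᴴ.mulVecLin ∘ₗ
      (WithLp.linearEquiv 2 ℂ (Fin m → ℂ)).toLinearMap
  have hinner : ∀ (a b : Fin p → ℂ),
      (inner ℂ ((WithLp.equiv 2 (Fin p → ℂ)).symm a)
        ((WithLp.equiv 2 (Fin p → ℂ)).symm b) : ℂ) = star a ⬝ᵥ b :=
    fun a b => (EuclideanSpace.inner_toLp_toLp a b).trans (dotProduct_comm _ _)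
  have hw : ((WithLp.equiv 2 (Fin p → ℂ)).symm w) ∈ (LinearMap.range g)ᗮᗮ := by
    rw [Submodule.mem_orthogonal]
    intro u hu
    have hAu : A *ᵥ (WithLp.equiv 2 _ u) = 0 := by
      have key : ∀ y : Fin m → ℂ, star y ⬝ᵥ (A *ᵥ (WithLp.equiv 2 _ u)) = 0 := by
        intro y
        have h1 := hu (g ((WithLp.equiv 2 (Fin m → ℂ)).symm y))
          (LinearMap.mem_range_self g _)
        have h2 : star (Aᴴ *ᵥ y) ⬝ᵥ (WithLp.equiv 2 _ u) = 0 := by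
          rw [← hinner (Aᴴ *ᵥ y) (WithLp.equiv 2 _ u)]
          exact h1
        rwa [Matrix.star_mulVec, Matrix.conjTranspose_conjTranspose,
          ← Matrix.dotProduct_mulVec] at h2
      exact dotProduct_star_self_eq_zero.mp (key (A *ᵥ (WithLp.equiv 2 _ u)))
    calc (inner ℂ u ((WithLp.equiv 2 (Fin p → ℂ)).symm w) : ℂ)
        = star (WithLp.equiv 2 _ u) ⬝ᵥ w := hinner _ _
      _ = 0 := h _ hAu
  rw [Submodule.orthogonal_orthogonal] at hw
  obtain ⟨y, hy⟩ := hw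
  exact ⟨WithLp.equiv 2 _ y, congrArg (WithLp.equiv 2 _) hy⟩

/-- If `im Uᴴ ∩ im Vᴴ = {0}` and `Uₚᴴ Q Uₚ ⪰ 0`, `Vₚᴴ Q Vₚ ⪰ 0`, then every
`x ∈ ker U ∩ ker V` with `xᴴ Q x = 0` satisfies `Q x = 0`. -/
theorem stmt3 {p m n k l : ℕ}
    (Q : Matrix (Fin p) (Fin p) ℂ) (hQ : Q.IsHermitian)
    (U : Matrix (Fin m) (Fin p) ℂ) (V : Matrix (Fin n) (Fin p) ℂ)
    (hIm : ∀ v : Fin p → ℂ, (∃ y, Uᴴ *ᵥ y = v) → (∃ z, Vᴴ *ᵥ z = v) → v = 0)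
    (Up : Matrix (Fin p) (Fin k) ℂ) (Vp : Matrix (Fin p) (Fin l) ℂ)
    (hUp1 : U * Up = 0)
    (hUp2 : ∀ x, U *ᵥ x = 0 → ∃ y, Up *ᵥ y = x)
    (hUp3 : Function.Injective (Up.mulVec))
    (hVp1 : V * Vp = 0)
    (hVp2 : ∀ x, V *ᵥ x = 0 → ∃ y, Vp *ᵥ y = x)
    (hVp3 : Function.Injective (Vp.mulVec))
    (hU : (Upᴴ * Q * Up).PosSemidef) (hV : (Vpᴴ * Q * Vp).PosSemidef) :
    ∀ x : Fin p → ℂ, U *ᵥ x = 0 → V *ᵥ x = 0 →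
      star x ⬝ᵥ (Q *ᵥ x) = 0 → Q *ᵥ x = 0 := by
  intro x hUx hVx hxQx
  -- key: Upᴴ *ᵥ (Q *ᵥ x) = 0, similarly for Vp
  have key : ∀ (q : ℕ) (W : Matrix (Fin p) (Fin q) ℂ),
      (Wᴴ * Q * W).PosSemidef → (∃ y, W *ᵥ y = x) → Wᴴ *ᵥ (Q *ᵥ x) = 0 := by
    intro q W hW ⟨y, hy⟩
    have h0 : star y ⬝ᵥ ((Wᴴ * Q * W) *ᵥ y) = 0 := by
      have : (Wᴴ * Q * W) *ᵥ y = Wᴴ *ᵥ (Q *ᵥ x) := by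
        rw [← hy, ← Matrix.mulVec_mulVec, ← Matrix.mulVec_mulVec]
      rw [this, Matrix.dotProduct_mulVec, ← Matrix.star_mulVec, hy]
      exact hxQx
    have := hW.dotProduct_mulVec_zero_iff y |>.mp h0
    calc Wᴴ *ᵥ (Q *ᵥ x) = (Wᴴ * Q * W) *ᵥ y := by
          rw [← hy, ← Matrix.mulVec_mulVec, ← Matrix.mulVec_mulVec]
      _ = 0 := this
  have hUkey := key k Up hU (hUp2 x hUx)
  have hVkey := key l Vp hV (hVp2 x hVx)
  -- Q *ᵥ x is orthogonal to ker U, hence in im Uᴴ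
  have hperp : ∀ (q : ℕ) (W : Matrix (Fin p) (Fin q) ℂ), Wᴴ *ᵥ (Q *ᵥ x) = 0 →
      ∀ v : Fin p → ℂ, (∃ c, W *ᵥ c = v) → star v ⬝ᵥ (Q *ᵥ x) = 0 := by
    intro q W hWkey v ⟨c, hc⟩
    rw [← hc, Matrix.star_mulVec, ← Matrix.dotProduct_mulVec, hWkey, dotProduct_zero]
  have hQxU : ∃ y, Uᴴ *ᵥ y = Q *ᵥ x :=
    mem_range_conjTranspose_of_perp_ker U (Q *ᵥ x)
      (fun v hv => hperp k Up hUkey v (hUp2 v hv))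
  have hQxV : ∃ y, Vᴴ *ᵥ y = Q *ᵥ x :=
    mem_range_conjTranspose_of_perp_ker V (Q *ᵥ x)
      (fun v hv => hperp l Vp hVkey v (hVp2 v hv))
  exact hIm _ hQxU hQxV
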